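/- Let n ≥ 1, let Z₁,…,Zₙ be i.i.d. standard normal random variables, X = Σ_{i=1}^{n} Zᵢ², σ > 0 and 0 ≤ P < σ²/2. Define U₀ = (σ²/(σ²+P))^{n/2}·exp(P·X/(2(σ²+P))) and U₁ = (σ²/(σ²+P))^{n/2}·exp(P·X/(2σ²)). Then E[U₀²] / E[U₁²] = (1 − 2P²/(σ²(σ²−P)))^{n/2}. -/

import Mathlib

open MeasureTheory ProbabilityTheory Real
open scoped NNReal ENNReal

lemma gauss_sq_int {t : ℝ} (ht : t < 1/2) :
    ∫ x, Real.exp (t * x ^ 2) ∂(gaussianReal 0 1) = Real.sqrt (1 - 2*t)⁻¹ := by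
  have hb : (0:ℝ) < 1/2 - t := by linarith
  rw [gaussianReal_of_var_ne_zero 0 one_ne_zero]
  have hpdf : gaussianPDF 0 1 = fun x => ((Real.toNNReal (gaussianPDFReal 0 1 x) : ℝ≥0) : ℝ≥0∞) := by
    funext x; rfl
  rw [hpdf, integral_withDensity_eq_integral_smul
    ((measurable_gaussianPDFReal 0 1).real_toNNReal) _]
  have heq : ∀ x : ℝ, (Real.toNNReal (gaussianPDFReal 0 1 x) : ℝ≥0) • Real.exp (t * x ^ 2)
      = (Real.sqrt (2 * π))⁻¹ * Real.exp (-(1/2 - t) * x ^ 2) := by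
    intro x
    rw [NNReal.smul_def, Real.coe_toNNReal _ (gaussianPDFReal_nonneg 0 1 x)]
    unfold gaussianPDFReal
    push_cast
    rw [smul_eq_mul, mul_assoc, ← Real.exp_add]
    ring_nf
  simp_rw [heq]
  rw [integral_const_mul, integral_gaussian]
  rw [← Real.sqrt_inv, ← Real.sqrt_mul (by positivity)]
  congr 1
  have hπ : (0:ℝ) < π := Real.pi_pos
  have h1 : (1/2 - t) ≠ 0 := hb.ne'
  have h2 : (1 - 2*t) ≠ 0 := by linarith
  have hπ' : π ≠ 0 := hπ.ne'
  field_simp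

lemma chisq_int {Ω : Type} [MeasurableSpace Ω] (μ : Measure Ω) [IsProbabilityMeasure μ]
    (n : ℕ) (Z : Fin n → Ω → ℝ) (hZm : ∀ i, Measurable (Z i))
    (hZ : ∀ i, μ.map (Z i) = gaussianReal 0 1)
    (hindep : iIndepFun Z μ)
    {t : ℝ} (ht : t < 1/2) :
    ∫ ω, Real.exp (t * ∑ i, Z i ω ^ 2) ∂μ = ((1 - 2*t)⁻¹) ^ ((n:ℝ)/2) := by
  set Y : Fin n → Ω → ℝ := fun i ω => Z i ω ^ 2 with hYdef
  have hYm : ∀ i, Measurable (Y i) := fun i => (hZm i).pow_const 2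
  have hY : iIndepFun Y μ :=
    hindep.comp (fun _ x => x ^ 2) (fun _ => measurable_id.pow_const 2)
  have h1 : ∫ ω, Real.exp (t * ∑ i, Z i ω ^ 2) ∂μ = mgf (∑ i, Y i) μ t := by
    simp [mgf, Finset.sum_apply, hYdef]
  rw [h1, iIndepFun.mgf_sum hY hYm Finset.univ]
  have h2 : ∀ i, mgf (Y i) μ t = Real.sqrt (1 - 2*t)⁻¹ := by
    intro i
    have : mgf (Y i) μ t = ∫ x, Real.exp (t * x ^ 2) ∂(μ.map (Z i)) := by
      rw [integral_map (hZm i).aemeasurable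
        (by exact (Real.measurable_exp.comp ((measurable_id.pow_const 2).const_mul t)).aestronglyMeasurable)]
      rfl
    rw [this, hZ i, gauss_sq_int ht]
  simp_rw [h2]
  rw [Finset.prod_const, Finset.card_univ, Fintype.card_fin]
  have h3 : (0:ℝ) ≤ (1 - 2*t)⁻¹ := by
    have : (0:ℝ) < 1 - 2*t := by linarith
    positivity
  rw [Real.sqrt_eq_rpow, ← Real.rpow_natCast ((1-2*t)⁻¹ ^ ((1:ℝ)/2)) n, ← Real.rpow_mul h3]
  congr 1
  ring

/-- If `X = Σᵢ Zᵢ²` is chi-squared with `n` degrees of freedom, `σ > 0`, `0 ≤ P < σ²/2`,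
`U₀ = (σ²/(σ²+P))^(n/2) * exp (P X / (2(σ²+P)))` and
`U₁ = (σ²/(σ²+P))^(n/2) * exp (P X / (2σ²))`, then
`E[U₀²] / E[U₁²] = (1 - 2P²/(σ²(σ²-P)))^(n/2)`. -/
theorem stmt_8
    {Ω : Type} [MeasurableSpace Ω] (μ : Measure Ω) [IsProbabilityMeasure μ]
    (n : ℕ) (hn : 1 ≤ n)
    (Z : Fin n → Ω → ℝ) (hZm : ∀ i, Measurable (Z i))
    (hZ : ∀ i, μ.map (Z i) = gaussianReal 0 1)
    (hindep : iIndepFun Z μ)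
    (σ P : ℝ) (hσ : 0 < σ) (hP0 : 0 ≤ P) (hP : P < σ ^ 2 / 2) :
    (∫ ω, ((σ ^ 2 / (σ ^ 2 + P)) ^ ((n : ℝ) / 2)
        * Real.exp (P * (∑ i, Z i ω ^ 2) / (2 * (σ ^ 2 + P)))) ^ 2 ∂μ)
      / (∫ ω, ((σ ^ 2 / (σ ^ 2 + P)) ^ ((n : ℝ) / 2)
        * Real.exp (P * (∑ i, Z i ω ^ 2) / (2 * σ ^ 2))) ^ 2 ∂μ)
      = (1 - 2 * P ^ 2 / (σ ^ 2 * (σ ^ 2 - P))) ^ ((n : ℝ) / 2) := by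
  have hσ2 : (0:ℝ) < σ ^ 2 := by positivity
  have hden : (0:ℝ) < σ ^ 2 + P := by linarith
  set c : ℝ := (σ ^ 2 / (σ ^ 2 + P)) ^ ((n : ℝ) / 2) with hc
  have hcpos : 0 < c := Real.rpow_pos_of_pos (by positivity) _
  set t0 : ℝ := P / (σ ^ 2 + P) with ht0def
  set t1 : ℝ := P / σ ^ 2 with ht1def
  have ht0 : t0 < 1/2 := by
    rw [ht0def, div_lt_div_iff₀ hden (by norm_num : (0:ℝ) < 2)]; linarith
  have ht1 : t1 < 1/2 := by
    rw [ht1def, div_lt_div_iff₀ hσ2 (by norm_num : (0:ℝ) < 2)]; linarith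
  have key : ∀ (d : ℝ), d ≠ 0 → ∀ x : ℝ,
      (c * Real.exp (P * x / (2 * d))) ^ 2 = c ^ 2 * Real.exp ((P / d) * x) := by
    intro d hd x
    rw [mul_pow, sq (Real.exp _), ← Real.exp_add]
    congr 1
    field_simp
    ring
  have I0 : (∫ ω, (c * Real.exp (P * (∑ i, Z i ω ^ 2) / (2 * (σ ^ 2 + P)))) ^ 2 ∂μ)
      = c ^ 2 * ((1 - 2 * t0)⁻¹) ^ ((n : ℝ) / 2) := by
    simp_rw [key (σ ^ 2 + P) hden.ne']
    rw [integral_const_mul, chisq_int μ n Z hZm hZ hindep ht0]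
  have I1 : (∫ ω, (c * Real.exp (P * (∑ i, Z i ω ^ 2) / (2 * σ ^ 2))) ^ 2 ∂μ)
      = c ^ 2 * ((1 - 2 * t1)⁻¹) ^ ((n : ℝ) / 2) := by
    simp_rw [key (σ ^ 2) hσ2.ne']
    rw [integral_const_mul, chisq_int μ n Z hZm hZ hindep ht1]
  rw [I0, I1, mul_div_mul_left _ _ (by positivity : (c:ℝ) ^ 2 ≠ 0)]
  have h0pos : (0:ℝ) < 1 - 2 * t0 := by linarith
  have h1pos : (0:ℝ) < 1 - 2 * t1 := by linarith
  rw [← Real.div_rpow (by positivity) (by positivity)]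
  congr 1
  have hσP : (0:ℝ) < σ ^ 2 - P := by linarith
  have hσ2P : (0:ℝ) < σ ^ 2 - 2 * P := by linarith
  have hA : 1 - 2 * t0 = (σ ^ 2 - P) / (σ ^ 2 + P) := by
    rw [ht0def]; field_simp; ring
  have hB : 1 - 2 * t1 = (σ ^ 2 - 2 * P) / σ ^ 2 := by
    rw [ht1def]; field_simp
  rw [hA, hB, inv_div, inv_div]
  have h4 : σ ^ 2 * (σ ^ 2 - P) ≠ 0 := by positivity
  have h5 : (1:ℝ) - 2 * P ^ 2 / (σ ^ 2 * (σ ^ 2 - P))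
      = (σ ^ 2 * (σ ^ 2 - P) - 2 * P ^ 2) / (σ ^ 2 * (σ ^ 2 - P)) := by
    field_simp
  have h6 : (σ ^ 2 + P) / (σ ^ 2 - P) / (σ ^ 2 / (σ ^ 2 - 2 * P))
      = ((σ ^ 2 + P) * (σ ^ 2 - 2 * P)) / (σ ^ 2 * (σ ^ 2 - P)) := by
    rw [div_div_eq_mul_div, div_mul_eq_mul_div, div_div, mul_comm (σ ^ 2 - P)]
  rw [h6, h5, div_eq_div_iff (by positivity) (by positivity)]
  ring
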